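/- Uniform directional bound for the semimetric ρ over the Lipschitz class (step in the proof of the continuity lemma): Let d ≥ 1, R > 0, p > 1, L = p·(2R)^{p−1}, and let P, Q be probability measures on ℝ^d supported in the closed ball B̄(0,R). Then there exists a constant C depending only on R and p such that for every f ∈ 𝒞_{R,L} and all unit vectors u, v ∈ S^{d−1}: ρ((f,u),(f,v)) ≤ C·( (∫ |⟨u,x⟩ − ⟨v,x⟩|² dP(x))^{1/2} + (∫ |⟨u,y⟩ − ⟨v,y⟩|² dQ(y))^{1/2} ) ≤ 2·C·R·‖u − v‖₂. In particular, sup_{f ∈ 𝒞_{R,L}} ρ((f,u),(f,v)) → 0 as v → u. -/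

import Mathlib

open MeasureTheory Set

/-- The class `𝒞_{R,L}` of functions vanishing at `0` and `L`-Lipschitz on `[-R, R]`. -/
def CRL (R L : ℝ) : Set (ℝ → ℝ) :=
  {f | f 0 = 0 ∧ ∀ x ∈ Set.Icc (-R) R, ∀ x' ∈ Set.Icc (-R) R, |f x - f x'| ≤ L * |x - x'|}

/-- The `c`-transform `f^c(y) = inf_{x ∈ [-R,R]} (|x-y|^p - f(x))`. -/
noncomputable def ctrans (R p : ℝ) (f : ℝ → ℝ) : ℝ → ℝ :=
  fun y => sInf {z : ℝ | ∃ x ∈ Set.Icc (-R) R, z = |x - y| ^ p - f x}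

/-- The unit sphere `S^{d-1}` in `ℝ^d`. -/
def sph (d : ℕ) : Set (EuclideanSpace ℝ (Fin d)) :=
  Metric.sphere (0 : EuclideanSpace ℝ (Fin d)) 1

/-- The semimetric `ρ` on `𝒞_{R,L} × S^{d-1}`. -/
noncomputable def rho {d : ℕ} (R p : ℝ)
    (P Q : Measure (EuclideanSpace ℝ (Fin d)))
    (f : ℝ → ℝ) (u : EuclideanSpace ℝ (Fin d))
    (g : ℝ → ℝ) (v : EuclideanSpace ℝ (Fin d)) : ℝ :=
  Real.sqrt (∫ x, (f (inner ℝ u x : ℝ) - g (inner ℝ v x : ℝ)) ^ 2 ∂P) +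
  Real.sqrt (∫ y, (ctrans R p f (inner ℝ u y : ℝ) - ctrans R p g (inner ℝ v y : ℝ)) ^ 2 ∂Q)

private lemma rpow_diff_le {p M s t : ℝ} (hp : 1 < p) (_hM : 0 ≤ M)
    (hs : s ∈ Set.Icc 0 M) (ht : t ∈ Set.Icc 0 M) :
    |s ^ p - t ^ p| ≤ p * M ^ (p - 1) * |s - t| := by
  have key : ∀ x ∈ Set.Icc (0:ℝ) M, HasDerivWithinAt (fun x : ℝ => x ^ p)
      (p * x ^ (p - 1)) (Set.Icc 0 M) x := fun x _ =>
    (Real.hasDerivAt_rpow_const (Or.inr hp.le)).hasDerivWithinAt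
  have bound : ∀ x ∈ Set.Icc (0:ℝ) M, ‖p * x ^ (p - 1)‖ ≤ p * M ^ (p - 1) := by
    intro x hx
    rw [Real.norm_eq_abs, abs_mul, abs_of_pos (by linarith : (0:ℝ) < p),
      abs_of_nonneg (Real.rpow_nonneg hx.1 _)]
    exact mul_le_mul_of_nonneg_left (Real.rpow_le_rpow hx.1 hx.2 (by linarith)) (by linarith)
  have h := Convex.norm_image_sub_le_of_norm_hasDerivWithin_le key bound (convex_Icc _ _) ht hs
  simpa [Real.norm_eq_abs] using h

private lemma abs_pow_lip {R p : ℝ} (hR : 0 < R) (hp : 1 < p)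
    {x a b : ℝ} (hx : x ∈ Set.Icc (-R) R) (ha : a ∈ Set.Icc (-R) R) (hb : b ∈ Set.Icc (-R) R) :
    |(|x - a| ^ p) - (|x - b| ^ p)| ≤ p * (2 * R) ^ (p - 1) * |a - b| := by
  have hxR : |x| ≤ R := abs_le.mpr ⟨hx.1, hx.2⟩
  have haR : |a| ≤ R := abs_le.mpr ⟨ha.1, ha.2⟩
  have hbR : |b| ≤ R := abs_le.mpr ⟨hb.1, hb.2⟩
  have h1 : |x - a| ∈ Set.Icc (0:ℝ) (2 * R) :=
    ⟨abs_nonneg _, le_trans (abs_sub _ _) (by linarith)⟩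
  have h2 : |x - b| ∈ Set.Icc (0:ℝ) (2 * R) :=
    ⟨abs_nonneg _, le_trans (abs_sub _ _) (by linarith)⟩
  have h3 := rpow_diff_le hp (by linarith) h1 h2
  have h4 : |(|x - a|) - (|x - b|)| ≤ |a - b| := by
    have := abs_sub_abs_le_abs_sub (x - a) (x - b)
    have h5 := abs_sub_abs_le_abs_sub (x - b) (x - a)
    rw [abs_sub_le_iff]
    constructor
    · calc |x - a| - |x - b| ≤ |(x - a) - (x - b)| := this
        _ = |a - b| := by rw [show (x - a) - (x - b) = -(a - b) by ring, abs_neg]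
    · calc |x - b| - |x - a| ≤ |(x - b) - (x - a)| := h5
        _ = |a - b| := by rw [show (x - b) - (x - a) = a - b by ring]
  calc |(|x - a| ^ p) - (|x - b| ^ p)| ≤ p * (2 * R) ^ (p - 1) * |(|x - a|) - (|x - b|)| := h3
    _ ≤ p * (2 * R) ^ (p - 1) * |a - b| := by
        apply mul_le_mul_of_nonneg_left h4
        positivity

private lemma ctrans_lip {R p : ℝ} (hR : 0 < R) (hp : 1 < p) {f : ℝ → ℝ}
    (hf : f ∈ CRL R (p * (2 * R) ^ (p - 1))) {a b : ℝ}
    (ha : a ∈ Set.Icc (-R) R) (hb : b ∈ Set.Icc (-R) R) :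
    |ctrans R p f a - ctrans R p f b| ≤ p * (2 * R) ^ (p - 1) * |a - b| := by
  set L := p * (2 * R) ^ (p - 1) with hLdef
  have hL0 : 0 ≤ L := by rw [hLdef]; positivity
  obtain ⟨hf0, hlip⟩ := hf
  have h0R : (0:ℝ) ∈ Set.Icc (-R) R := ⟨by linarith, hR.le⟩
  have hfb : ∀ x ∈ Set.Icc (-R) R, |f x| ≤ L * R := by
    intro x hx
    have h := hlip x hx 0 h0R
    rw [hf0, sub_zero, sub_zero] at h
    calc |f x| ≤ L * |x| := h
      _ ≤ L * R := mul_le_mul_of_nonneg_left (abs_le.mpr ⟨hx.1, hx.2⟩) hL0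
  have hne : ∀ y : ℝ, {z : ℝ | ∃ x ∈ Set.Icc (-R) R, z = |x - y| ^ p - f x}.Nonempty :=
    fun y => ⟨|0 - y| ^ p - f 0, 0, h0R, rfl⟩
  have hbdd : ∀ y : ℝ, BddBelow {z : ℝ | ∃ x ∈ Set.Icc (-R) R, z = |x - y| ^ p - f x} := by
    intro y
    refine ⟨-(L * R), ?_⟩
    rintro z ⟨x, hx, rfl⟩
    have h1 := hfb x hx
    have h2 : (0:ℝ) ≤ |x - y| ^ p := Real.rpow_nonneg (abs_nonneg _) p
    have h3 := (abs_le.mp h1).2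
    linarith
  have key : ∀ c d : ℝ, c ∈ Set.Icc (-R) R → d ∈ Set.Icc (-R) R →
      ctrans R p f c ≤ ctrans R p f d + L * |c - d| := by
    intro c d hc hd
    have step : ∀ z ∈ {z : ℝ | ∃ x ∈ Set.Icc (-R) R, z = |x - d| ^ p - f x},
        ctrans R p f c - L * |c - d| ≤ z := by
      rintro z ⟨x, hx, rfl⟩
      have h1 : |x - c| ^ p - f x ∈ {z : ℝ | ∃ x ∈ Set.Icc (-R) R, z = |x - c| ^ p - f x} :=
        ⟨x, hx, rfl⟩
      have h2 : ctrans R p f c ≤ |x - c| ^ p - f x := csInf_le (hbdd c) h1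
      have h3 := abs_pow_lip hR hp hx hc hd
      have h4 := (abs_le.mp h3).2
      rw [← hLdef] at h4
      linarith
    have := le_csInf (hne d) step
    have heq : ctrans R p f d = sInf {z : ℝ | ∃ x ∈ Set.Icc (-R) R, z = |x - d| ^ p - f x} := rfl
    rw [heq]
    linarith
  have k1 := key a b ha hb
  have k2 := key b a hb ha
  rw [abs_sub_comm b a] at k2
  rw [abs_sub_le_iff]
  constructor <;> linarith

private lemma part_bound {d : ℕ} {R : ℝ} (hR : 0 < R) {C : ℝ} (hC : 0 ≤ C)
    (μ : Measure (EuclideanSpace ℝ (Fin d))) [IsProbabilityMeasure μ]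
    (hμ : μ (Metric.closedBall 0 R) = 1)
    (F : ℝ → ℝ) (hF : ∀ s ∈ Set.Icc (-R) R, ∀ t ∈ Set.Icc (-R) R, |F s - F t| ≤ C * |s - t|)
    (u v : EuclideanSpace ℝ (Fin d)) (hu : ‖u‖ = 1) (hv : ‖v‖ = 1) :
    Real.sqrt (∫ x, (F (inner ℝ u x : ℝ) - F (inner ℝ v x : ℝ)) ^ 2 ∂μ) ≤
      C * Real.sqrt (∫ x, ((inner ℝ u x : ℝ) - (inner ℝ v x : ℝ)) ^ 2 ∂μ) ∧
    Real.sqrt (∫ x, ((inner ℝ u x : ℝ) - (inner ℝ v x : ℝ)) ^ 2 ∂μ) ≤ R * ‖u - v‖ := by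
  have hae : ∀ᵐ x ∂μ, ‖x‖ ≤ R := by
    have hcompl : μ (Metric.closedBall (0 : EuclideanSpace ℝ (Fin d)) R)ᶜ = 0 :=
      (prob_compl_eq_zero_iff measurableSet_closedBall).mpr hμ
    filter_upwards [measure_eq_zero_iff_ae_notMem.mp hcompl] with x hx
    simpa [Metric.mem_closedBall, dist_zero_right] using not_not.mp hx
  -- pointwise bounds
  have hptw : ∀ x : EuclideanSpace ℝ (Fin d), ‖x‖ ≤ R →
      |(inner ℝ u x : ℝ) - (inner ℝ v x : ℝ)| ≤ ‖u - v‖ * R ∧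
      (inner ℝ u x : ℝ) ∈ Set.Icc (-R) R ∧ (inner ℝ v x : ℝ) ∈ Set.Icc (-R) R := by
    intro x hx
    have h1 : |(inner ℝ (u - v) x : ℝ)| ≤ ‖u - v‖ * ‖x‖ := abs_real_inner_le_norm _ _
    have h2 : (inner ℝ (u - v) x : ℝ) = (inner ℝ u x : ℝ) - (inner ℝ v x : ℝ) := inner_sub_left _ _ _
    have hu1 : |(inner ℝ u x : ℝ)| ≤ R := by
      calc |(inner ℝ u x : ℝ)| ≤ ‖u‖ * ‖x‖ := abs_real_inner_le_norm _ _
        _ = ‖x‖ := by rw [hu, one_mul]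
        _ ≤ R := hx
    have hv1 : |(inner ℝ v x : ℝ)| ≤ R := by
      calc |(inner ℝ v x : ℝ)| ≤ ‖v‖ * ‖x‖ := abs_real_inner_le_norm _ _
        _ = ‖x‖ := by rw [hv, one_mul]
        _ ≤ R := hx
    refine ⟨?_, abs_le.mp hu1, abs_le.mp hv1⟩
    rw [← h2]
    calc |(inner ℝ (u - v) x : ℝ)| ≤ ‖u - v‖ * ‖x‖ := h1
      _ ≤ ‖u - v‖ * R := mul_le_mul_of_nonneg_left hx (norm_nonneg _)
  -- integrability of the inner-difference square
  have hcont : Continuous fun x : EuclideanSpace ℝ (Fin d) =>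
      ((inner ℝ u x : ℝ) - (inner ℝ v x : ℝ)) ^ 2 := by
    apply Continuous.pow
    exact (continuous_const.inner continuous_id).sub (continuous_const.inner continuous_id)
  have hint : Integrable (fun x => ((inner ℝ u x : ℝ) - (inner ℝ v x : ℝ)) ^ 2) μ := by
    apply Integrable.mono' (integrable_const ((‖u - v‖ * R) ^ 2))
      hcont.aestronglyMeasurable
    filter_upwards [hae] with x hx
    obtain ⟨h1, _, _⟩ := hptw x hx
    rw [Real.norm_eq_abs, abs_of_nonneg (sq_nonneg _), ← sq_abs]
    exact pow_le_pow_left₀ (abs_nonneg _) h1 2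
  constructor
  · -- first part
    have hmono : (∫ x, (F (inner ℝ u x : ℝ) - F (inner ℝ v x : ℝ)) ^ 2 ∂μ) ≤
        ∫ x, C ^ 2 * ((inner ℝ u x : ℝ) - (inner ℝ v x : ℝ)) ^ 2 ∂μ := by
      apply integral_mono_of_nonneg
      · exact Filter.Eventually.of_forall fun x => sq_nonneg _
      · exact hint.const_mul _
      · filter_upwards [hae] with x hx
        obtain ⟨_, hux, hvx⟩ := hptw x hx
        have hF1 := hF _ hux _ hvx
        calc (F (inner ℝ u x : ℝ) - F (inner ℝ v x : ℝ)) ^ 2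
            = |F (inner ℝ u x : ℝ) - F (inner ℝ v x : ℝ)| ^ 2 := (sq_abs _).symm
          _ ≤ (C * |(inner ℝ u x : ℝ) - (inner ℝ v x : ℝ)|) ^ 2 :=
              pow_le_pow_left₀ (abs_nonneg _) hF1 2
          _ = C ^ 2 * ((inner ℝ u x : ℝ) - (inner ℝ v x : ℝ)) ^ 2 := by
              rw [mul_pow, sq_abs]
    calc Real.sqrt (∫ x, (F (inner ℝ u x : ℝ) - F (inner ℝ v x : ℝ)) ^ 2 ∂μ)
        ≤ Real.sqrt (∫ x, C ^ 2 * ((inner ℝ u x : ℝ) - (inner ℝ v x : ℝ)) ^ 2 ∂μ) :=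
          Real.sqrt_le_sqrt hmono
      _ = Real.sqrt (C ^ 2 * ∫ x, ((inner ℝ u x : ℝ) - (inner ℝ v x : ℝ)) ^ 2 ∂μ) := by
          rw [integral_const_mul]
      _ = C * Real.sqrt (∫ x, ((inner ℝ u x : ℝ) - (inner ℝ v x : ℝ)) ^ 2 ∂μ) := by
          rw [Real.sqrt_mul (sq_nonneg C), Real.sqrt_sq hC]
  · -- second part
    have hmono : (∫ x, ((inner ℝ u x : ℝ) - (inner ℝ v x : ℝ)) ^ 2 ∂μ) ≤ (‖u - v‖ * R) ^ 2 := by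
      have : (∫ x, ((inner ℝ u x : ℝ) - (inner ℝ v x : ℝ)) ^ 2 ∂μ) ≤
          ∫ _x, (‖u - v‖ * R) ^ 2 ∂μ := by
        apply integral_mono_of_nonneg
        · exact Filter.Eventually.of_forall fun x => sq_nonneg _
        · exact integrable_const _
        · filter_upwards [hae] with x hx
          obtain ⟨h1, _, _⟩ := hptw x hx
          calc ((inner ℝ u x : ℝ) - (inner ℝ v x : ℝ)) ^ 2
              = |(inner ℝ u x : ℝ) - (inner ℝ v x : ℝ)| ^ 2 := (sq_abs _).symm
            _ ≤ (‖u - v‖ * R) ^ 2 := pow_le_pow_left₀ (abs_nonneg _) h1 2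
      simpa using this
    calc Real.sqrt (∫ x, ((inner ℝ u x : ℝ) - (inner ℝ v x : ℝ)) ^ 2 ∂μ)
        ≤ Real.sqrt ((‖u - v‖ * R) ^ 2) := Real.sqrt_le_sqrt hmono
      _ = ‖u - v‖ * R := Real.sqrt_sq (by positivity)
      _ = R * ‖u - v‖ := mul_comm _ _

/-- Uniform directional bound for the semimetric `ρ` over the Lipschitz class. -/
theorem rho_directional_bound (R p : ℝ) (hR : 0 < R) (hp : 1 < p) :
    ∃ C : ℝ, 0 < C ∧ ∀ d : ℕ, 1 ≤ d →
      ∀ P Q : Measure (EuclideanSpace ℝ (Fin d)),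
        IsProbabilityMeasure P → IsProbabilityMeasure Q →
        P (Metric.closedBall 0 R) = 1 → Q (Metric.closedBall 0 R) = 1 →
        ∀ f ∈ CRL R (p * (2 * R) ^ (p - 1)), ∀ u ∈ sph d, ∀ v ∈ sph d,
          rho R p P Q f u f v ≤
              C * (Real.sqrt (∫ x, ((inner ℝ u x : ℝ) - (inner ℝ v x : ℝ)) ^ 2 ∂P) +
                Real.sqrt (∫ y, ((inner ℝ u y : ℝ) - (inner ℝ v y : ℝ)) ^ 2 ∂Q)) ∧
            C * (Real.sqrt (∫ x, ((inner ℝ u x : ℝ) - (inner ℝ v x : ℝ)) ^ 2 ∂P) +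
                Real.sqrt (∫ y, ((inner ℝ u y : ℝ) - (inner ℝ v y : ℝ)) ^ 2 ∂Q)) ≤
              2 * C * R * ‖u - v‖ := by
  set L := p * (2 * R) ^ (p - 1) with hLdef
  have hL : 0 < L := by rw [hLdef]; positivity
  refine ⟨L, hL, ?_⟩
  intro d _hd P Q hPprob hQprob hP1 hQ1 f hf u hu v hv
  have hu1 : ‖u‖ = 1 := by simpa [sph, mem_sphere_zero_iff_norm] using hu
  have hv1 : ‖v‖ = 1 := by simpa [sph, mem_sphere_zero_iff_norm] using hv
  have hFlip : ∀ s ∈ Set.Icc (-R) R, ∀ t ∈ Set.Icc (-R) R, |f s - f t| ≤ L * |s - t| :=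
    fun s hs t ht => hf.2 s hs t ht
  have hGlip : ∀ s ∈ Set.Icc (-R) R, ∀ t ∈ Set.Icc (-R) R,
      |ctrans R p f s - ctrans R p f t| ≤ L * |s - t| :=
    fun s hs t ht => ctrans_lip hR hp hf hs ht
  have hPpart := part_bound hR hL.le P hP1 f hFlip u v hu1 hv1
  have hQpart := part_bound hR hL.le Q hQ1 (ctrans R p f) hGlip u v hu1 hv1
  set a := Real.sqrt (∫ x, ((inner ℝ u x : ℝ) - (inner ℝ v x : ℝ)) ^ 2 ∂P)
  set b := Real.sqrt (∫ y, ((inner ℝ u y : ℝ) - (inner ℝ v y : ℝ)) ^ 2 ∂Q)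
  constructor
  · have h1 := hPpart.1
    have h2 := hQpart.1
    unfold rho
    have : L * (a + b) = L * a + L * b := mul_add _ _ _
    rw [this]
    exact add_le_add h1 h2
  · have h1 := hPpart.2
    have h2 := hQpart.2
    have : L * (a + b) ≤ L * (R * ‖u - v‖ + R * ‖u - v‖) :=
      mul_le_mul_of_nonneg_left (add_le_add h1 h2) hL.le
    calc L * (a + b) ≤ L * (R * ‖u - v‖ + R * ‖u - v‖) := this
      _ = 2 * L * R * ‖u - v‖ := by ring
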